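/- For α > 0 and λ ∈ ℝ, the derivative of t ↦ E_α(λ·t^α) at any t > 0 equals t^(α-1)·λ·E_{α,α}(λ·t^α). -/

import Mathlib

open Filter

lemma ml_summable_aux {α β : ℝ} (hα : 0 < α) (hβ : 0 < β) {x : ℝ} (hx : 0 ≤ x) :
    Summable fun n : ℕ => x ^ n / Real.Gamma (α * n + β) := by
  set L : ℝ := (2 * x + 2) ^ (1 / α) with hLdef
  have hb1 : (1:ℝ) < 2 * x + 2 := by linarith
  have hb0 : (0:ℝ) ≤ 2 * x + 2 := by linarith
  have hL1 : 1 < L := by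
    rw [hLdef]
    exact (Real.one_lt_rpow_iff_of_pos (by linarith)).mpr (Or.inl ⟨hb1, by positivity⟩)
  have hL0 : (0:ℝ) < L := lt_trans one_pos hL1
  have hLα : L ^ α = 2 * x + 2 := by
    rw [hLdef, ← Real.rpow_mul hb0, one_div, inv_mul_cancel₀ hα.ne', Real.rpow_one]
  have hfac : ∀ᶠ m : ℕ in atTop, L ^ m ≤ (m.factorial : ℝ) := by
    have h := (FloorSemiring.tendsto_pow_div_factorial_atTop (K := ℝ) L).eventually_le_const
      one_pos
    filter_upwards [h] with m hm
    have hf : (0:ℝ) < m.factorial := by exact_mod_cast m.factorial_pos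
    exact (div_le_one hf).mp hm
  obtain ⟨M, hM⟩ := eventually_atTop.mp hfac
  obtain ⟨N, hN⟩ := exists_nat_ge (((M:ℝ) + 3) / α)
  have hNα : (M:ℝ) + 3 ≤ α * N := by
    rw [div_le_iff₀ hα] at hN
    linarith
  rw [← summable_nat_add_iff N]
  have key : ∀ n : ℕ, x ^ (n + N) / Real.Gamma (α * ((n + N : ℕ) : ℝ) + β)
      ≤ (L ^ 2 * (1/2 : ℝ) ^ N) * (1/2 : ℝ) ^ n := by
    intro n
    set k : ℕ := n + N with hk
    have hkN : (N:ℝ) ≤ k := by exact_mod_cast Nat.le_add_left N n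
    have hαk : (M:ℝ) + 3 ≤ α * k := le_trans hNα (by nlinarith)
    set s : ℝ := α * k + β with hs
    have hM0 : (0:ℝ) ≤ M := Nat.cast_nonneg M
    have hs3 : (3:ℝ) ≤ s := by rw [hs]; linarith
    have hs0 : (0:ℝ) ≤ s := by linarith
    set j : ℕ := ⌊s⌋₊ with hj
    have hj3 : 3 ≤ j := Nat.le_floor (by exact_mod_cast hs3)
    have hjs : (j:ℝ) ≤ s := Nat.floor_le hs0
    have hsj1 : s < (j:ℝ) + 1 := Nat.lt_floor_add_one s
    -- Γ s ≥ Γ j = (j-1)!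
    have hΓge : Real.Gamma (j:ℝ) ≤ Real.Gamma s :=
      Real.Gamma_strictMonoOn_Ici.monotoneOn
        (by simp only [Set.mem_Ici]; exact_mod_cast le_trans (by norm_num) hj3)
        (by simp only [Set.mem_Ici]; linarith) hjs
    have hΓj : Real.Gamma (j:ℝ) = ((j-1).factorial : ℝ) := by
      rw [show (j:ℝ) = ((j-1 : ℕ) : ℝ) + 1 by
        rw [Nat.cast_sub (by omega)]; push_cast; ring]
      exact Real.Gamma_nat_eq_factorial (j-1)
    have hjM : M + 2 ≤ j := by
      have h' : (M:ℝ) + 2 ≤ (j:ℝ) := by linarith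
      exact_mod_cast h'
    have hfacj : L ^ (j-1) ≤ ((j-1).factorial : ℝ) := hM (j-1) (by omega)
    have hrp : L ^ (α * k - 2) ≤ L ^ (j-1 : ℕ) := by
      rw [← Real.rpow_natCast L (j-1)]
      apply Real.rpow_le_rpow_of_exponent_le hL1.le
      rw [Nat.cast_sub (by omega)]
      push_cast
      linarith
    have hrpval : L ^ (α * k - 2) = (2*x+2) ^ k / L ^ 2 := by
      rw [Real.rpow_sub hL0, Real.rpow_mul hL0.le, hLα, Real.rpow_natCast, Real.rpow_two]
    have hB : (2*x+2) ^ k / L ^ 2 ≤ Real.Gamma s := by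
      calc (2*x+2) ^ k / L ^ 2 = L ^ (α * k - 2) := hrpval.symm
        _ ≤ L ^ (j-1 : ℕ) := hrp
        _ ≤ ((j-1).factorial : ℝ) := hfacj
        _ = Real.Gamma (j:ℝ) := hΓj.symm
        _ ≤ Real.Gamma s := hΓge
    have hBpos : (0:ℝ) < (2*x+2) ^ k / L ^ 2 := by positivity
    have h1 : x ^ k / Real.Gamma s ≤ x ^ k / ((2*x+2) ^ k / L ^ 2) := by
      gcongr
    have h2 : x ^ k / ((2*x+2) ^ k / L ^ 2) = L ^ 2 * (x/(2*x+2)) ^ k := by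
      rw [div_pow]
      field_simp
    have hhalf : x / (2*x+2) ≤ 1/2 := by
      rw [div_le_div_iff₀ (by linarith) (by norm_num)]
      linarith
    have h3 : (x/(2*x+2)) ^ k ≤ (1/2:ℝ) ^ k := by
      apply pow_le_pow_left₀ (by positivity) hhalf
    calc x ^ (n+N) / Real.Gamma (α * ((n+N : ℕ):ℝ) + β) = x ^ k / Real.Gamma s := rfl
      _ ≤ x ^ k / ((2*x+2) ^ k / L ^ 2) := h1
      _ = L ^ 2 * (x/(2*x+2)) ^ k := h2
      _ ≤ L ^ 2 * (1/2:ℝ) ^ k := by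
          apply mul_le_mul_of_nonneg_left h3 (by positivity)
      _ = (L ^ 2 * (1/2:ℝ) ^ N) * (1/2:ℝ) ^ n := by rw [hk, pow_add]; ring
  apply Summable.of_nonneg_of_le (fun n => ?_) key
    ((summable_geometric_of_lt_one (by norm_num) (by norm_num)).mul_left _)
  exact div_nonneg (pow_nonneg hx _)
    (Real.Gamma_pos_of_pos (by positivity)).le

lemma ml_term {α : ℝ} (hα : 0 < α) (m : ℕ) (z : ℝ) :
    ((m:ℝ) + 1) * z ^ m / Real.Gamma (α * ((m:ℝ) + 1) + 1)
      = α⁻¹ * (z ^ m / Real.Gamma (α * m + α)) := by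
  have h0 : α * m + α ≠ 0 := by positivity
  have hΓeq : Real.Gamma (α * ((m:ℝ)+1) + 1) = (α * m + α) * Real.Gamma (α * m + α) := by
    rw [show α * ((m:ℝ)+1) + 1 = (α * m + α) + 1 by ring, Real.Gamma_add_one h0]
  rw [hΓeq]
  have hΓ : Real.Gamma (α * m + α) ≠ 0 :=
    (Real.Gamma_pos_of_pos (show (0:ℝ) < α*m+α by positivity)).ne'
  have hm1 : ((m:ℝ) + 1) ≠ 0 := by positivity
  field_simp

noncomputable def mittagLeffler (α z : ℝ) : ℝ := ∑' n : ℕ, z ^ n / Real.Gamma (α * n + 1)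

noncomputable def mittagLeffler2 (α β z : ℝ) : ℝ := ∑' n : ℕ, z ^ n / Real.Gamma (α * n + β)

theorem ml_deriv (α : ℝ) (hα : 0 < α) (lam : ℝ) (t : ℝ) (ht : 0 < t) :
    HasDerivAt (fun u : ℝ => mittagLeffler α (lam * u ^ α))
      (t ^ (α - 1) * lam * mittagLeffler2 α α (lam * t ^ α)) t := by
  set z₀ : ℝ := lam * t ^ α with hz₀
  -- inner derivative
  have hin : HasDerivAt (fun u : ℝ => lam * u ^ α) (lam * (α * t ^ (α - 1))) t :=
    (Real.hasDerivAt_rpow_const (Or.inl ht.ne')).const_mul lam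
  set R : ℝ := |z₀| + 1 with hR
  have hR0 : (0:ℝ) < R := by positivity
  set g : ℕ → ℝ → ℝ := fun n z => z ^ n / Real.Gamma (α * n + 1) with hg
  set g' : ℕ → ℝ → ℝ := fun n z => (n:ℝ) * z ^ (n-1) / Real.Gamma (α * n + 1) with hg'
  set u : ℕ → ℝ := fun n => (n:ℝ) * R ^ (n-1) / Real.Gamma (α * n + 1) with hu
  have hu_sum : Summable u := by
    rw [← summable_nat_add_iff 1]
    have heq : ∀ n : ℕ, u (n+1) = α⁻¹ * (R ^ n / Real.Gamma (α * n + α)) := by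
      intro n
      have := ml_term hα n R
      simp only [hu, Nat.add_sub_cancel]
      push_cast
      exact this
    simp only [heq]
    exact (ml_summable_aux hα hα hR0.le).mul_left _
  have hgderiv : ∀ n z, HasDerivAt (g n) (g' n z) z := fun n z =>
    (hasDerivAt_pow n z).div_const _
  have hΓpos : ∀ n : ℕ, (0:ℝ) < Real.Gamma (α * n + 1) := fun n =>
    Real.Gamma_pos_of_pos (by positivity)
  have hbound : ∀ n z, z ∈ Metric.ball (0:ℝ) R → ‖g' n z‖ ≤ u n := by
    intro n z hz
    have hzR : |z| ≤ R := by
      have := Metric.mem_ball.mp hz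
      rw [Real.dist_eq, sub_zero] at this
      linarith
    have : ‖g' n z‖ = (n:ℝ) * |z| ^ (n-1) / Real.Gamma (α * n + 1) := by
      rw [hg', Real.norm_eq_abs, abs_div, abs_mul, abs_pow, Nat.abs_cast,
        abs_of_pos (hΓpos n)]
    rw [this]
    show (n:ℝ) * |z| ^ (n-1) / Real.Gamma (α * n + 1)
      ≤ (n:ℝ) * R ^ (n-1) / Real.Gamma (α * n + 1)
    gcongr
  have hg0 : Summable fun n => g n 0 := by
    apply summable_of_ne_finset_zero (s := {0})
    intro n hn
    have hn0 : n ≠ 0 := by simpa using hn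
    simp [hg, zero_pow hn0]
  have hball : z₀ ∈ Metric.ball (0:ℝ) R := by
    rw [Metric.mem_ball, Real.dist_eq, sub_zero, hR]
    linarith [abs_nonneg z₀]
  have h0ball : (0:ℝ) ∈ Metric.ball (0:ℝ) R := by
    simpa [Metric.mem_ball] using hR0
  have hout : HasDerivAt (fun z => ∑' n, g n z) (∑' n, g' n z₀) z₀ :=
    hasDerivAt_tsum_of_isPreconnected hu_sum Metric.isOpen_ball
      (convex_ball (0:ℝ) R).isPreconnected (fun n y _ => hgderiv n y)
      hbound h0ball hg0 hball
  have hcomp := hout.comp t hin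
  have hsum' : Summable fun n => g' n z₀ :=
    Summable.of_norm_bounded hu_sum (fun n => hbound n z₀ hball)
  have htsum : (∑' n, g' n z₀) = α⁻¹ * mittagLeffler2 α α z₀ := by
    rw [Summable.tsum_eq_zero_add hsum']
    have h0 : g' 0 z₀ = 0 := by simp [hg']
    have hterm : ∀ n : ℕ, g' (n+1) z₀ = α⁻¹ * (z₀ ^ n / Real.Gamma (α * n + α)) := by
      intro n
      have := ml_term hα n z₀
      simp only [hg', Nat.add_sub_cancel]
      push_cast
      exact this
    simp only [h0, hterm, zero_add]
    rw [tsum_mul_left]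
    rfl
  have hfun : (fun u : ℝ => mittagLeffler α (lam * u ^ α))
      = (fun z => ∑' n, g n z) ∘ (fun u : ℝ => lam * u ^ α) := rfl
  rw [hfun]
  refine hcomp.congr_deriv ?_
  rw [htsum]
  field_simp
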